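/- R_{1,3} = ∑_{n≥1} H_{n-1}/(n−1/2)³ = −14·ln(2)·ζ(3) + π⁴/8. -/

import Mathlib

/-- odd harmonic numbers of order r: h_n^{(r)} = ∑_{k=1}^n 1/(k-1/2)^r -/
noncomputable def oddH (r n : ℕ) : ℝ := ∑ k ∈ Finset.range n, (((k : ℝ) + 1/2) ^ r)⁻¹

/-- generalized harmonic numbers of order r: H_n^{(r)} = ∑_{k=1}^n 1/k^r -/
noncomputable def genH (r n : ℕ) : ℝ := ∑ k ∈ Finset.range n, (((k : ℝ) + 1) ^ r)⁻¹

/-- T_{p,q} = ∑_{n≥1} h_{n-1}^{(p)}/(n-1/2)^q -/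
noncomputable def Tsum (p q : ℕ) : ℝ := ∑' n : ℕ, oddH p n / ((n : ℝ) + 1/2) ^ q

/-- S̃_{p,q} = ∑_{n≥1} h_n^{(p)}/n^q -/
noncomputable def Ssum (p q : ℕ) : ℝ := ∑' n : ℕ, oddH p (n + 1) / ((n : ℝ) + 1) ^ q

/-- R_{p,q} = ∑_{n≥1} H_{n-1}^{(p)}/(n-1/2)^q -/
noncomputable def Rsum (p q : ℕ) : ℝ := ∑' n : ℕ, genH p n / ((n : ℝ) + 1/2) ^ q

/-- t̃(s) = ∑_{n≥1} 1/(n-1/2)^s -/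
noncomputable def ttv (s : ℕ) : ℝ := ∑' n : ℕ, (((n : ℝ) + 1/2) ^ s)⁻¹

/-- ζ(s) = ∑_{n≥1} 1/n^s (for integer s ≥ 2) -/
noncomputable def zv (s : ℕ) : ℝ := ∑' n : ℕ, (((n : ℝ) + 1) ^ s)⁻¹

open Filter Topology Finset


/-- positivity helper -/
private lemma obpos (n : ℕ) : (0:ℝ) < (n:ℝ) + 1/2 := by positivity

private lemma summable_base : Summable (fun n : ℕ => (((n:ℝ)+1)^2)⁻¹) := by
  have h := (Real.summable_one_div_nat_pow (p := 2)).2 (by norm_num)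
  have h2 := (summable_nat_add_iff 1).2 h
  refine h2.congr fun n => ?_
  push_cast
  rw [one_div]

private lemma summable_of_le_sq {f : ℕ → ℝ} (C : ℝ) (h0 : ∀ n, 0 ≤ f n)
    (h : ∀ n, f n ≤ C * (((n:ℝ)+1)^2)⁻¹) : Summable f :=
  Summable.of_nonneg_of_le h0 h (summable_base.mul_left C)

private lemma ob_inv_le (s i : ℕ) :
    ((((i:ℝ)+1/2))^s)⁻¹ ≤ 2^s * ((((i:ℝ)+1))^s)⁻¹ := by
  have hx : (0:ℝ) < ((i:ℝ)+1/2)^s := by positivity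
  have hy : (0:ℝ) < ((i:ℝ)+1)^s := by positivity
  rw [← div_eq_mul_inv, le_div_iff₀ hy, inv_mul_eq_div, div_le_iff₀ hx, ← mul_pow]
  exact pow_le_pow_left₀ (by positivity) (by linarith) s

private lemma summable_ob {s : ℕ} (hs : 2 ≤ s) :
    Summable (fun n : ℕ => ((((n:ℝ)+1/2))^s)⁻¹) := by
  refine summable_of_le_sq (2^s) (fun n => by positivity) (fun n => ?_)
  calc ((((n:ℝ)+1/2))^s)⁻¹ ≤ 2^s * ((((n:ℝ)+1))^s)⁻¹ := ob_inv_le s n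
    _ ≤ 2^s * (((n:ℝ)+1)^2)⁻¹ := by
        have h1 : ((n:ℝ)+1)^2 ≤ ((n:ℝ)+1)^s := pow_le_pow_right₀ (by linarith [Nat.cast_nonneg (α := ℝ) n]) hs
        have := inv_anti₀ (by positivity) h1
        nlinarith [this, pow_pos (show (0:ℝ) < 2 by norm_num) s]

/-- general telescoping sum -/
private lemma hasSum_telescope {a : ℕ → ℝ} (hpos : ∀ k, 0 ≤ a k) (hmono : ∀ k, a (k+1) ≤ a k)
    (hlim : Tendsto a atTop (𝓝 0)) (m : ℕ) :
    HasSum (fun k => a k - a (k+m)) (∑ k ∈ Finset.range m, a k) := by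
  have hanti : Antitone a := antitone_nat_of_succ_le hmono
  have hterm : ∀ k, 0 ≤ a k - a (k+m) := fun k => sub_nonneg.2 (hanti (Nat.le_add_right k m))
  have hps : ∀ N, ∑ k ∈ range N, (a k - a (k+m))
      = ∑ k ∈ range m, a k - ∑ k ∈ range m, a (N+k) := by
    intro N
    induction N with
    | zero => simp
    | succ N ih =>
      rw [Finset.sum_range_succ, ih]
      have h1 : ∑ k ∈ range (m+1), a (N+k) = ∑ k ∈ range m, a (N+k) + a (N+m) :=
        Finset.sum_range_succ _ m
      have h2 : ∑ k ∈ range (m+1), a (N+k) = a N + ∑ k ∈ range m, a (N+1+k) := by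
        rw [Finset.sum_range_succ', Nat.add_zero, add_comm]
        congr 1
        exact Finset.sum_congr rfl fun k _ => by rw [show N+(k+1)=N+1+k by omega]
      have : ∑ k ∈ range m, a (N+1+k) = ∑ k ∈ range m, a (N+k) + a (N+m) - a N := by
        linarith [h1, h2]
      rw [this]; ring
  rw [hasSum_iff_tendsto_nat_of_nonneg hterm]
  have htail : Tendsto (fun N => ∑ k ∈ range m, a (N+k)) atTop (𝓝 0) := by
    have : ∀ k, Tendsto (fun N => a (N+k)) atTop (𝓝 0) :=
      fun k => hlim.comp (tendsto_add_atTop_nat k)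
    simpa using tendsto_finset_sum (range m) (fun k _ => this k)
  have := (tendsto_const_nhds (x := ∑ k ∈ range m, a k) (f := atTop (α := ℕ))).sub htail
  rw [sub_zero] at this
  exact this.congr fun N => (hps N).symm

/-- telescoping for 1/(k+c) -/
private lemma hasSum_tel_c {c : ℝ} (hc : 0 < c) (m : ℕ) :
    HasSum (fun k : ℕ => ((k:ℝ)+c)⁻¹ - ((k:ℝ)+(m:ℝ)+c)⁻¹) (∑ k ∈ Finset.range m, ((k:ℝ)+c)⁻¹) := by
  have h := hasSum_telescope (a := fun k : ℕ => ((k:ℝ)+c)⁻¹)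
    (fun k => by positivity)
    (fun k => by
      apply inv_anti₀ (by positivity)
      push_cast; linarith)
    (by
      apply Tendsto.inv_tendsto_atTop
      apply tendsto_atTop_add_const_right
      exact tendsto_natCast_atTop_atTop) m
  have heq : (fun k : ℕ => ((k:ℝ)+c)⁻¹ - (((k+m:ℕ):ℝ)+c)⁻¹)
      = (fun k : ℕ => ((k:ℝ)+c)⁻¹ - ((k:ℝ)+(m:ℝ)+c)⁻¹) := by
    funext k; push_cast; ring
  rwa [heq] at h


private lemma partial_log2 (N : ℕ) :
    ∑ k ∈ range N, (((k:ℝ)+1/2)⁻¹ - ((k:ℝ)+1)⁻¹)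
      = 2*((harmonic (2*N) : ℝ) - (harmonic N : ℝ)) := by
  induction N with
  | zero => simp
  | succ N ih =>
    rw [Finset.sum_range_succ, ih, show 2*(N+1) = (2*N+1)+1 by ring, harmonic_succ, harmonic_succ,
      harmonic_succ]
    push_cast
    have h1 : ((N:ℝ)+1/2) ≠ 0 := by positivity
    have h2 : ((N:ℝ)+1) ≠ 0 := by positivity
    have h3 : (2*(N:ℝ)+1) ≠ 0 := by positivity
    have h4 : (2*(N:ℝ)+1+1) ≠ 0 := by positivity
    field_simp
    ring

private lemma tendsto_H2N_sub_HN :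
    Tendsto (fun N : ℕ => ((harmonic (2*N) : ℝ) - (harmonic N : ℝ))) atTop (𝓝 (Real.log 2)) := by
  have h2n : Tendsto (fun N : ℕ => 2*N) atTop atTop := by
    apply Filter.tendsto_atTop.2
    intro b
    filter_upwards [Filter.eventually_ge_atTop b] with n hn
    omega
  have hA : Tendsto (fun N : ℕ => ((harmonic (2*N) : ℝ) - Real.log (2*N))) atTop
      (𝓝 Real.eulerMascheroniConstant) := by
    have := Real.tendsto_harmonic_sub_log.comp h2n
    refine this.congr fun N => ?_
    simp [Function.comp]
  have hB := Real.tendsto_harmonic_sub_log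
  have hcomb := (hA.sub hB).add (tendsto_const_nhds (x := Real.log 2))
  rw [sub_self, zero_add] at hcomb
  refine hcomb.congr' ?_
  filter_upwards [Filter.eventually_ge_atTop 1] with N hN
  have hN0 : (N:ℝ) ≠ 0 := by positivity
  rw [Real.log_mul (by norm_num) hN0]
  ring

private lemma hasSum_log2 :
    HasSum (fun k : ℕ => ((k:ℝ)+1/2)⁻¹ - ((k:ℝ)+1)⁻¹) (2 * Real.log 2) := by
  have hnn : ∀ k : ℕ, 0 ≤ ((k:ℝ)+1/2)⁻¹ - ((k:ℝ)+1)⁻¹ := by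
    intro k
    have := inv_anti₀ (show (0:ℝ) < (k:ℝ)+1/2 by positivity) (show ((k:ℝ)+1/2) ≤ (k:ℝ)+1 by linarith)
    linarith
  rw [hasSum_iff_tendsto_nat_of_nonneg hnn]
  have := tendsto_H2N_sub_HN.const_mul (2:ℝ)
  refine this.congr fun N => ?_
  rw [partial_log2]



private lemma summable_zv {s : ℕ} (hs : 2 ≤ s) : Summable (fun n : ℕ => (((n:ℝ)+1)^s)⁻¹) := by
  have h := (Real.summable_one_div_nat_pow (p := s)).2 hs
  have h2 := (summable_nat_add_iff 1).2 h
  refine h2.congr fun n => ?_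
  push_cast
  rw [one_div]


private lemma hasSum_zv {s : ℕ} (hs : 2 ≤ s) :
    HasSum (fun n : ℕ => (((n:ℝ)+1)^s)⁻¹) (zv s) := (summable_zv hs).hasSum

private lemma hasSum_ttv {s : ℕ} (hs : 2 ≤ s) :
    HasSum (fun n : ℕ => ((((n:ℝ)+1/2))^s)⁻¹) (ttv s) := (summable_ob hs).hasSum

private lemma summable_nat_inv_pow {s : ℕ} (hs : 2 ≤ s) :
    Summable (fun n : ℕ => ((n:ℝ)^s)⁻¹) := by
  refine ((Real.summable_one_div_nat_pow (p := s)).2 hs).congr fun n => ?_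
  rw [one_div]

private lemma tsum_nat_inv_pow {s : ℕ} (hs : 2 ≤ s) :
    ∑' n : ℕ, ((n:ℝ)^s)⁻¹ = zv s := by
  have h := hasSum_zv hs
  have h0 : HasSum (fun n : ℕ => (((n+1:ℕ):ℝ)^s)⁻¹) (zv s) := by
    refine h.congr fun n => ?_; push_cast; ring
  have h1 : HasSum (fun n : ℕ => ((n:ℝ)^s)⁻¹) (zv s) := by
    refine (hasSum_nat_add_iff' (f := fun n : ℕ => ((n:ℝ)^s)⁻¹) 1).1 ?_
    have hz : ∑ i ∈ Finset.range 1, (((i:ℕ):ℝ)^s)⁻¹ = 0 := by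
      rw [Finset.sum_range_one, Nat.cast_zero, zero_pow (by omega), inv_zero]
    rw [hz, sub_zero]
    exact h0
  exact h1.tsum_eq

private lemma ttv_eq {s : ℕ} (hs : 2 ≤ s) : ttv s = (2^s - 1) * zv s := by
  set f : ℕ → ℝ := fun n => ((n:ℝ)^s)⁻¹ with hf
  have hsumf : Summable f := summable_nat_inv_pow hs
  have heven : Summable (fun k => f (2*k)) := hsumf.comp_injective (fun a b h => by omega)
  have hodd : Summable (fun k => f (2*k+1)) := hsumf.comp_injective (fun a b h => by omega)
  have hkey := tsum_even_add_odd heven hodd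
  have he : ∑' k, f (2*k) = (2^s)⁻¹ * zv s := by
    have : ∀ k : ℕ, f (2*k) = (2^s)⁻¹ * f k := by
      intro k
      simp only [hf]
      push_cast
      rw [mul_pow, mul_inv]
    rw [tsum_congr this, tsum_mul_left, tsum_nat_inv_pow hs]
  have ho : ∑' k, f (2*k+1) = (2^s)⁻¹ * ttv s := by
    have : ∀ k : ℕ, f (2*k+1) = (2^s)⁻¹ * ((((k:ℝ)+1/2))^s)⁻¹ := by
      intro k
      simp only [hf]
      push_cast
      rw [← mul_inv, ← mul_pow]
      norm_num
      ring_nf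
    rw [tsum_congr this, tsum_mul_left, (hasSum_ttv hs).tsum_eq]
  rw [he, ho, tsum_nat_inv_pow hs] at hkey
  have h2s : (0:ℝ) < 2^s := by positivity
  field_simp at hkey ⊢
  linarith




private lemma zv_two : zv 2 = Real.pi^2/6 := by
  have h := hasSum_zeta_two
  simp only [one_div] at h
  rw [← tsum_nat_inv_pow (le_refl 2), h.tsum_eq]

private lemma zv_four : zv 4 = Real.pi^4/90 := by
  have h := hasSum_zeta_four
  simp only [one_div] at h
  rw [← tsum_nat_inv_pow (show 2 ≤ 4 by norm_num), h.tsum_eq]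

/-- tail of ttv sums -/
private lemma hasSum_tail {s : ℕ} (hs : 2 ≤ s) (m : ℕ) :
    HasSum (fun k : ℕ => ((((k+m:ℕ):ℝ)+1/2)^s)⁻¹) (ttv s - oddH s m) := by
  have h2 := (hasSum_nat_add_iff' (f := fun n : ℕ => ((((n:ℝ)+1/2))^s)⁻¹) m).2 (hasSum_ttv hs)
  simpa only [oddH] using h2

private lemma oddH_le_ttv {s : ℕ} (hs : 2 ≤ s) (m : ℕ) : oddH s m ≤ ttv s := by
  have := (hasSum_tail hs m)
  have hnn : 0 ≤ ttv s - oddH s m :=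
    this.nonneg (fun k => by positivity)
  linarith

private lemma tail_le_aux {s : ℕ} (hs : 2 ≤ s) {m : ℕ} (hm : 1 ≤ m) (C : ℝ)
    (hC : ∀ k : ℕ, ((((k+m:ℕ):ℝ)+1/2)^s)⁻¹ ≤ C * (((k:ℝ)+(m:ℝ))⁻¹ - ((k:ℝ)+1+(m:ℝ))⁻¹))
    (hC0 : 0 ≤ C) :
    ttv s - oddH s m ≤ C * ((m:ℝ))⁻¹ := by
  have htel := (hasSum_tel_c (c := (m:ℝ)) (by exact_mod_cast hm) 1)
  have htel' : HasSum (fun k : ℕ => ((k:ℝ)+(m:ℝ))⁻¹ - ((k:ℝ)+1+(m:ℝ))⁻¹) ((m:ℝ))⁻¹ := by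
    have : ∑ k ∈ Finset.range 1, ((k:ℝ)+(m:ℝ))⁻¹ = ((m:ℝ))⁻¹ := by
      rw [Finset.sum_range_one]; norm_num
    rw [this] at htel
    have hfun : (fun k : ℕ => ((k:ℝ)+(m:ℝ))⁻¹ - ((k:ℝ)+((1:ℕ):ℝ)+(m:ℝ))⁻¹)
        = fun k : ℕ => ((k:ℝ)+(m:ℝ))⁻¹ - ((k:ℝ)+1+(m:ℝ))⁻¹ := by
      funext k; norm_num
    rwa [hfun] at htel
  have h1 := hasSum_tail hs m
  have := hasSum_le hC h1 (htel'.mul_left C)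
  exact this

private lemma tail2_le {m : ℕ} (hm : 1 ≤ m) : ttv 2 - oddH 2 m ≤ ((m:ℝ))⁻¹ := by
  have := tail_le_aux (le_refl 2) hm 1 ?_ (by norm_num)
  · simpa using this
  · intro k
    have hm' : (1:ℝ) ≤ (m:ℝ) := by exact_mod_cast hm
    have hx : (0:ℝ) < (k:ℝ)+(m:ℝ) := by linarith [Nat.cast_nonneg (α := ℝ) k]
    have hx1 : (0:ℝ) < (k:ℝ)+1+(m:ℝ) := by linarith
    have heq : ((k:ℝ)+(m:ℝ))⁻¹ - ((k:ℝ)+1+(m:ℝ))⁻¹ = (((k:ℝ)+(m:ℝ))*((k:ℝ)+1+(m:ℝ)))⁻¹ := by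
      rw [mul_inv]
      field_simp
      ring
    rw [one_mul, heq]
    push_cast
    apply inv_anti₀
    · positivity
    · nlinarith [Nat.cast_nonneg (α := ℝ) k]

private lemma tail3_le {m : ℕ} (hm : 1 ≤ m) : ttv 3 - oddH 3 m ≤ ((m:ℝ))⁻¹ * ((m:ℝ))⁻¹ := by
  have := tail_le_aux (show 2 ≤ 3 by norm_num) hm ((m:ℝ))⁻¹ ?_ (by positivity)
  · exact this
  · intro k
    have hm' : (1:ℝ) ≤ (m:ℝ) := by exact_mod_cast hm
    have hx : (0:ℝ) < (k:ℝ)+(m:ℝ) := by linarith [Nat.cast_nonneg (α := ℝ) k]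
    have hx1 : (0:ℝ) < (k:ℝ)+1+(m:ℝ) := by linarith
    have heq : ((k:ℝ)+(m:ℝ))⁻¹ - ((k:ℝ)+1+(m:ℝ))⁻¹ = (((k:ℝ)+(m:ℝ))*((k:ℝ)+1+(m:ℝ)))⁻¹ := by
      rw [mul_inv]; field_simp; ring
    rw [heq, ← mul_inv]
    push_cast
    apply inv_anti₀
    · positivity
    · have hk : (0:ℝ) ≤ (k:ℝ) := Nat.cast_nonneg k
      nlinarith [mul_le_mul (show (m:ℝ) ≤ (k:ℝ)+(m:ℝ)+1/2 by linarith)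
        (show ((k:ℝ)+(m:ℝ))*((k:ℝ)+1+(m:ℝ)) ≤ ((k:ℝ)+(m:ℝ)+1/2)^2 by nlinarith)
        (by positivity) (by positivity)]




private lemma oddH_nonneg (r n : ℕ) : 0 ≤ oddH r n := by
  apply Finset.sum_nonneg; intro k _; positivity

private lemma oddH_one_eq (m : ℕ) : oddH 1 m = ∑ k ∈ range m, ((k:ℝ)+1/2)⁻¹ := by
  unfold oddH; exact Finset.sum_congr rfl fun k _ => by rw [pow_one]

private lemma oddH1_le (m : ℕ) : oddH 1 m ≤ 2*m := by
  rw [oddH_one_eq]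
  calc ∑ k ∈ range m, ((k:ℝ)+1/2)⁻¹ ≤ ∑ k ∈ range m, (2:ℝ) := by
        apply Finset.sum_le_sum; intro k _
        have h0 : (0:ℝ) ≤ (k:ℝ) := Nat.cast_nonneg k
        rw [show (2:ℝ) = (2⁻¹:ℝ)⁻¹ by norm_num]
        exact inv_anti₀ (by norm_num) (by linarith)
    _ = 2*m := by rw [Finset.sum_const, card_range]; push_cast; ring

private lemma sym13 (N : ℕ) :
    ∑ i ∈ range N, (oddH 1 (i+1) * (((i:ℝ)+1/2)^3)⁻¹ + oddH 3 (i+1) * ((i:ℝ)+1/2)⁻¹)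
      = (∑ i ∈ range N, ((i:ℝ)+1/2)⁻¹) * (∑ i ∈ range N, (((i:ℝ)+1/2)^3)⁻¹)
        + ∑ i ∈ range N, (((i:ℝ)+1/2)^4)⁻¹ := by
  induction N with
  | zero => simp
  | succ N ih =>
    have hone : oddH 1 (N+1) = (∑ i ∈ range N, ((i:ℝ)+1/2)⁻¹) + ((N:ℝ)+1/2)⁻¹ := by
      rw [oddH_one_eq, Finset.sum_range_succ]
    have hthree : oddH 3 (N+1) = (∑ i ∈ range N, (((i:ℝ)+1/2)^3)⁻¹) + (((N:ℝ)+1/2)^3)⁻¹ := by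
      unfold oddH; rw [Finset.sum_range_succ]
    have hx : (0:ℝ) < (N:ℝ)+1/2 := by positivity
    have hpow : ((((N:ℝ)+1/2))^4)⁻¹ = ((N:ℝ)+1/2)⁻¹ * ((((N:ℝ)+1/2))^3)⁻¹ := by
      rw [← mul_inv]; congr 1; ring
    rw [Finset.sum_range_succ, ih, Finset.sum_range_succ, Finset.sum_range_succ,
      Finset.sum_range_succ (f := fun i => (((i:ℝ)+1/2)^4)⁻¹), hone, hthree, hpow]
    ring

private lemma sym22 (N : ℕ) :
    2 * ∑ i ∈ range N, oddH 2 (i+1) * (((i:ℝ)+1/2)^2)⁻¹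
      = (∑ i ∈ range N, (((i:ℝ)+1/2)^2)⁻¹)^2 + ∑ i ∈ range N, (((i:ℝ)+1/2)^4)⁻¹ := by
  induction N with
  | zero => simp
  | succ N ih =>
    have htwo : oddH 2 (N+1) = (∑ i ∈ range N, (((i:ℝ)+1/2)^2)⁻¹) + (((N:ℝ)+1/2)^2)⁻¹ := by
      unfold oddH; rw [Finset.sum_range_succ]
    have hpow : ((((N:ℝ)+1/2))^4)⁻¹ = ((((N:ℝ)+1/2))^2)⁻¹ * ((((N:ℝ)+1/2))^2)⁻¹ := by
      rw [← mul_inv]; congr 1; ring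
    rw [Finset.sum_range_succ, mul_add, ih, Finset.sum_range_succ,
      Finset.sum_range_succ (f := fun i => (((i:ℝ)+1/2)^4)⁻¹), htwo, hpow]
    ring

private lemma summable_O13 :
    Summable (fun i : ℕ => oddH 1 (i+1) * (((i:ℝ)+1/2)^3)⁻¹) := by
  refine summable_of_le_sq 32 (fun i => by
    have := oddH_nonneg 1 (i+1); positivity) (fun i => ?_)
  have h1 : oddH 1 (i+1) ≤ 2*(i+1) := by
    have := oddH1_le (i+1); push_cast at this ⊢; linarith
  have h2 : (((i:ℝ)+1/2)^3)⁻¹ ≤ 8 * ((((i:ℝ)+1))^3)⁻¹ := by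
    have := ob_inv_le 3 i; norm_num at this ⊢; exact this
  have h3 : (0:ℝ) ≤ (((i:ℝ)+1/2)^3)⁻¹ := by positivity
  have h4 : (0:ℝ) ≤ oddH 1 (i+1) := oddH_nonneg 1 (i+1)
  calc oddH 1 (i+1) * (((i:ℝ)+1/2)^3)⁻¹ ≤ (2*((i:ℝ)+1)) * (8 * ((((i:ℝ)+1))^3)⁻¹) := by
        apply mul_le_mul h1 h2 h3 (by positivity)
    _ = 16 * (((i:ℝ)+1) * ((((i:ℝ)+1))^3)⁻¹) := by ring
    _ ≤ 32 * (((i:ℝ)+1)^2)⁻¹ := by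
        have hi : (0:ℝ) < (i:ℝ)+1 := by positivity
        have : ((i:ℝ)+1) * ((((i:ℝ)+1))^3)⁻¹ = (((i:ℝ)+1)^2)⁻¹ := by
          field_simp
        rw [this]
        have : (0:ℝ) ≤ (((i:ℝ)+1)^2)⁻¹ := by positivity
        linarith

noncomputable def O13 : ℝ := ∑' i : ℕ, oddH 1 (i+1) * (((i:ℝ)+1/2)^3)⁻¹

private lemma summable_O22 :
    Summable (fun i : ℕ => oddH 2 (i+1) * (((i:ℝ)+1/2)^2)⁻¹) := by
  apply Summable.of_nonneg_of_le (fun i => by have := oddH_nonneg 2 (i+1); positivity)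
    (fun i => ?_) ((summable_ob (le_refl 2)).mul_left (ttv 2))
  apply mul_le_mul_of_nonneg_right (oddH_le_ttv (le_refl 2) (i+1)) (by positivity)

private lemma O22_eq :
    ∑' i : ℕ, oddH 2 (i+1) * (((i:ℝ)+1/2)^2)⁻¹ = (ttv 2 * ttv 2 + ttv 4)/2 := by
  have hs := summable_O22
  have h1 : Tendsto (fun N => 2 * ∑ i ∈ range N, oddH 2 (i+1) * (((i:ℝ)+1/2)^2)⁻¹)
      atTop (𝓝 (2 * ∑' i : ℕ, oddH 2 (i+1) * (((i:ℝ)+1/2)^2)⁻¹)) :=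
    hs.hasSum.tendsto_sum_nat.const_mul 2
  have h2 : Tendsto (fun N => (∑ i ∈ range N, (((i:ℝ)+1/2)^2)⁻¹)^2
      + ∑ i ∈ range N, (((i:ℝ)+1/2)^4)⁻¹) atTop (𝓝 (ttv 2 * ttv 2 + ttv 4)) := by
    have ha := (hasSum_ttv (le_refl 2)).tendsto_sum_nat
    have hb := (hasSum_ttv (show 2 ≤ 4 by norm_num)).tendsto_sum_nat
    have := (ha.mul ha).add hb
    refine this.congr fun N => ?_
    rw [sq]
  have h3 : Tendsto (fun N => 2 * ∑ i ∈ range N, oddH 2 (i+1) * (((i:ℝ)+1/2)^2)⁻¹)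
      atTop (𝓝 (ttv 2 * ttv 2 + ttv 4)) := by
    refine h2.congr fun N => ?_
    rw [← sym22]
  have := tendsto_nhds_unique h1 h3
  linarith




private lemma tail3_nonneg (m : ℕ) : 0 ≤ ttv 3 - oddH 3 m :=
  sub_nonneg.2 (oddH_le_ttv (by norm_num) m)

private lemma hasSum_C :
    HasSum (fun i : ℕ => (ttv 3 - oddH 3 (i+1)) * ((i:ℝ)+1/2)⁻¹) (O13 - ttv 4) := by
  have hnn : ∀ i : ℕ, 0 ≤ (ttv 3 - oddH 3 (i+1)) * ((i:ℝ)+1/2)⁻¹ := fun i =>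
    mul_nonneg (tail3_nonneg (i+1)) (by positivity)
  rw [hasSum_iff_tendsto_nat_of_nonneg hnn]
  -- partial sum identity
  have hps : ∀ N : ℕ, ∑ i ∈ range N, (ttv 3 - oddH 3 (i+1)) * ((i:ℝ)+1/2)⁻¹
      = (∑ i ∈ range N, ((i:ℝ)+1/2)⁻¹) * (ttv 3 - ∑ i ∈ range N, (((i:ℝ)+1/2)^3)⁻¹)
        - ∑ i ∈ range N, (((i:ℝ)+1/2)^4)⁻¹
        + ∑ i ∈ range N, oddH 1 (i+1) * (((i:ℝ)+1/2)^3)⁻¹ := by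
    intro N
    have h13 := sym13 N
    have hsplit : ∑ i ∈ range N, (ttv 3 - oddH 3 (i+1)) * ((i:ℝ)+1/2)⁻¹
        = ttv 3 * (∑ i ∈ range N, ((i:ℝ)+1/2)⁻¹)
          - ∑ i ∈ range N, oddH 3 (i+1) * ((i:ℝ)+1/2)⁻¹ := by
      rw [Finset.mul_sum, ← Finset.sum_sub_distrib]
      exact Finset.sum_congr rfl fun i _ => by ring
    have hsum13 : ∑ i ∈ range N, oddH 3 (i+1) * ((i:ℝ)+1/2)⁻¹
        = (∑ i ∈ range N, ((i:ℝ)+1/2)⁻¹) * (∑ i ∈ range N, (((i:ℝ)+1/2)^3)⁻¹)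
          + ∑ i ∈ range N, (((i:ℝ)+1/2)^4)⁻¹
          - ∑ i ∈ range N, oddH 1 (i+1) * (((i:ℝ)+1/2)^3)⁻¹ := by
      rw [Finset.sum_add_distrib] at h13
      linarith
    rw [hsplit, hsum13]
    ring
  -- limits
  have hG4 : Tendsto (fun N => ∑ i ∈ range N, (((i:ℝ)+1/2)^4)⁻¹) atTop (𝓝 (ttv 4)) :=
    (hasSum_ttv (show 2 ≤ 4 by norm_num)).tendsto_sum_nat
  have hA1 : Tendsto (fun N => ∑ i ∈ range N, oddH 1 (i+1) * (((i:ℝ)+1/2)^3)⁻¹) atTop (𝓝 O13) :=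
    summable_O13.hasSum.tendsto_sum_nat
  have hzero : Tendsto (fun N : ℕ => (∑ i ∈ range N, ((i:ℝ)+1/2)⁻¹)
      * (ttv 3 - ∑ i ∈ range N, (((i:ℝ)+1/2)^3)⁻¹)) atTop (𝓝 0) := by
    have hG1eq : ∀ N : ℕ, ∑ i ∈ range N, ((i:ℝ)+1/2)⁻¹ = oddH 1 N :=
      fun N => (oddH_one_eq N).symm
    have hG3eq : ∀ N : ℕ, ∑ i ∈ range N, (((i:ℝ)+1/2)^3)⁻¹ = oddH 3 N := fun N => rfl
    apply squeeze_zero' (g := fun N : ℕ => 2 * ((N:ℝ))⁻¹)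
    · filter_upwards with N
      exact mul_nonneg (by rw [hG1eq]; exact oddH_nonneg 1 N)
        (by rw [hG3eq]; exact tail3_nonneg N)
    · filter_upwards [Filter.eventually_ge_atTop 1] with N hN
      rw [hG1eq, hG3eq]
      have hN' : (1:ℝ) ≤ (N:ℝ) := by exact_mod_cast hN
      have hN0 : (N:ℝ) ≠ 0 := by linarith
      calc oddH 1 N * (ttv 3 - oddH 3 N) ≤ (2*N) * (((N:ℝ))⁻¹ * ((N:ℝ))⁻¹) := by
            apply mul_le_mul (oddH1_le N) (tail3_le hN) (tail3_nonneg N) (by positivity)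
        _ = 2 * ((N:ℝ))⁻¹ := by field_simp
    · have : Tendsto (fun N : ℕ => ((N:ℝ))⁻¹) atTop (𝓝 0) :=
        tendsto_inv_atTop_zero.comp tendsto_natCast_atTop_atTop
      simpa using this.const_mul 2
  have := (hzero.sub hG4).add hA1
  rw [zero_sub, neg_add_eq_sub] at this
  exact this.congr fun N => (hps N).symm




noncomputable def Sv (i : ℕ) : ℝ :=
  (((i:ℝ)+1/2)^3)⁻¹ * (oddH 1 (i+1) - 2*Real.log 2)
  - (((i:ℝ)+1/2)^2)⁻¹ * (ttv 2 - oddH 2 (i+1))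
  - ((i:ℝ)+1/2)⁻¹ * (ttv 3 - oddH 3 (i+1))

private lemma hasSum_inner (i : ℕ) :
    HasSum (fun k : ℕ => ((k:ℝ)+1)⁻¹ * (((k:ℝ)+(i:ℝ)+3/2)^3)⁻¹) (Sv i) := by
  have h1b := hasSum_tel_c (show (0:ℝ) < 1/2 by norm_num) (i+1)
  have h1 := h1b.sub hasSum_log2
  rw [← oddH_one_eq (i+1)] at h1
  have hfun1 : (fun k : ℕ => (((k:ℝ)+1/2)⁻¹ - ((k:ℝ)+((i+1:ℕ):ℝ)+1/2)⁻¹)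
      - (((k:ℝ)+1/2)⁻¹ - ((k:ℝ)+1)⁻¹))
      = fun k : ℕ => ((k:ℝ)+1)⁻¹ - ((k:ℝ)+(i:ℝ)+3/2)⁻¹ := by
    funext k
    have : (k:ℝ)+((i+1:ℕ):ℝ)+1/2 = (k:ℝ)+(i:ℝ)+3/2 := by push_cast; ring
    rw [this]; ring
  rw [hfun1] at h1
  have h2 := hasSum_tail (le_refl 2) (i+1)
  have hfun2 : (fun k : ℕ => ((((k+(i+1):ℕ):ℝ)+1/2)^2)⁻¹)
      = fun k : ℕ => (((k:ℝ)+(i:ℝ)+3/2)^2)⁻¹ := by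
    funext k
    have : (((k+(i+1):ℕ):ℝ)+1/2) = (k:ℝ)+(i:ℝ)+3/2 := by push_cast; ring
    rw [this]
  rw [hfun2] at h2
  have h3 := hasSum_tail (show 2 ≤ 3 by norm_num) (i+1)
  have hfun3 : (fun k : ℕ => ((((k+(i+1):ℕ):ℝ)+1/2)^3)⁻¹)
      = fun k : ℕ => (((k:ℝ)+(i:ℝ)+3/2)^3)⁻¹ := by
    funext k
    have : (((k+(i+1):ℕ):ℝ)+1/2) = (k:ℝ)+(i:ℝ)+3/2 := by push_cast; ring
    rw [this]
  rw [hfun3] at h3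
  have H := ((h1.mul_left ((((i:ℝ)+1/2)^3)⁻¹)).sub
      (h2.mul_left ((((i:ℝ)+1/2)^2)⁻¹))).sub (h3.mul_left (((i:ℝ)+1/2)⁻¹))
  have hkey : (fun k : ℕ => ((((i:ℝ)+1/2)^3)⁻¹ * (((k:ℝ)+1)⁻¹ - ((k:ℝ)+(i:ℝ)+3/2)⁻¹)
        - (((i:ℝ)+1/2)^2)⁻¹ * ((((k:ℝ)+(i:ℝ)+3/2)^2)⁻¹))
        - ((i:ℝ)+1/2)⁻¹ * ((((k:ℝ)+(i:ℝ)+3/2)^3)⁻¹))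
      = fun k : ℕ => ((k:ℝ)+1)⁻¹ * (((k:ℝ)+(i:ℝ)+3/2)^3)⁻¹ := by
    funext k
    have hm : (0:ℝ) < (k:ℝ)+1 := by positivity
    have hd : (0:ℝ) < (i:ℝ)+1/2 := by positivity
    have hmd : (0:ℝ) < (k:ℝ)+(i:ℝ)+3/2 := by positivity
    field_simp
    ring
  rw [hkey] at H
  exact H


noncomputable def F : ℕ × ℕ → ℝ :=
  fun p => if p.2 < p.1 then ((p.2:ℝ)+1)⁻¹ * (((p.1:ℝ)+1/2)^3)⁻¹ else 0

private lemma F_nonneg : ∀ p, 0 ≤ F p := by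
  intro p
  unfold F
  split_ifs
  · positivity
  · exact le_refl 0

private lemma hasSum_row (n : ℕ) :
    HasSum (fun k => F (n, k)) (genH 1 n * (((n:ℝ)+1/2)^3)⁻¹) := by
  have h0 : ∀ k ∉ range n, F (n, k) = 0 := by
    intro k hk
    unfold F
    rw [if_neg]
    simpa using fun h => hk (mem_range.2 h)
  have h : HasSum (fun k => F (n, k)) (∑ k ∈ range n, F (n, k)) :=
    hasSum_sum_of_ne_finset_zero (s := range n) h0
  have hval : ∑ k ∈ range n, F (n, k) = genH 1 n * (((n:ℝ)+1/2)^3)⁻¹ := by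
    rw [show ∑ k ∈ range n, F (n, k)
        = ∑ k ∈ range n, ((k:ℝ)+1)⁻¹ * (((n:ℝ)+1/2)^3)⁻¹ from
      Finset.sum_congr rfl fun k hk => by unfold F; rw [if_pos (mem_range.1 hk)]]
    rw [← Finset.sum_mul]
    congr 1
    unfold genH
    exact Finset.sum_congr rfl fun k _ => by rw [pow_one]
  rwa [hval] at h

private lemma genH_le (n : ℕ) : genH 1 n ≤ n := by
  unfold genH
  calc ∑ k ∈ range n, (((k:ℝ)+1)^1)⁻¹ ≤ ∑ k ∈ range n, (1:ℝ) := by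
        apply Finset.sum_le_sum
        intro k _
        rw [pow_one]
        have h0 : (0:ℝ) ≤ (k:ℝ) := Nat.cast_nonneg k
        rw [show (1:ℝ) = (1:ℝ)⁻¹ by norm_num]
        exact inv_anti₀ (by norm_num) (by linarith)
    _ = n := by rw [Finset.sum_const, card_range]; simp

private lemma genH_nonneg (n : ℕ) : 0 ≤ genH 1 n := by
  unfold genH; apply Finset.sum_nonneg; intro k _; positivity

private lemma summable_rows :
    Summable (fun n : ℕ => genH 1 n * (((n:ℝ)+1/2)^3)⁻¹) := by
  refine summable_of_le_sq 8 (fun n => mul_nonneg (genH_nonneg n) (by positivity)) (fun n => ?_)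
  have h2 : (((n:ℝ)+1/2)^3)⁻¹ ≤ 8 * ((((n:ℝ)+1))^3)⁻¹ := by
    have := ob_inv_le 3 n; norm_num at this ⊢; exact this
  have hn1 : (0:ℝ) < (n:ℝ)+1 := by positivity
  calc genH 1 n * (((n:ℝ)+1/2)^3)⁻¹ ≤ ((n:ℝ)+1) * (8 * ((((n:ℝ)+1))^3)⁻¹) := by
        apply mul_le_mul (by linarith [genH_le n]) h2 (by positivity) (by positivity)
    _ = 8 * (((n:ℝ)+1) * ((((n:ℝ)+1))^3)⁻¹) := by ring
    _ = 8 * (((n:ℝ)+1)^2)⁻¹ := by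
        congr 1
        field_simp

private lemma summable_F : Summable F := by
  rw [summable_prod_of_nonneg F_nonneg]
  constructor
  · exact fun n => (hasSum_row n).summable
  · refine summable_rows.congr fun n => ?_
    exact ((hasSum_row n).tsum_eq).symm

private def emap : ℕ × ℕ → ℕ × ℕ := fun q => (q.2 + q.1 + 1, q.2)

private lemma emap_inj : Function.Injective emap := by
  intro a b h
  unfold emap at h
  obtain ⟨h1, h2⟩ := Prod.mk.injEq _ _ _ _ ▸ h
  have := Prod.ext_iff.1 h
  simp only [emap] at this
  obtain ⟨ha, hb⟩ := this
  exact Prod.ext_iff.2 ⟨by omega, hb⟩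

private lemma F_zero_off_range : ∀ x ∉ Set.range emap, F x = 0 := by
  intro x hx
  unfold F
  rw [if_neg]
  intro hlt
  exact hx ⟨(x.1 - x.2 - 1, x.2), by
    unfold emap
    refine Prod.ext_iff.2 ⟨by simp; omega, rfl⟩⟩

private lemma hasSum_P :
    HasSum (fun q : ℕ × ℕ => ((q.2:ℝ)+1)⁻¹ * (((q.2:ℝ)+(q.1:ℝ)+3/2)^3)⁻¹) (∑' p, F p) := by
  have h := (emap_inj.hasSum_iff F_zero_off_range).2 summable_F.hasSum
  have hfun : F ∘ emap = fun q : ℕ × ℕ => ((q.2:ℝ)+1)⁻¹ * (((q.2:ℝ)+(q.1:ℝ)+3/2)^3)⁻¹ := by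
    funext q
    show F (q.2 + q.1 + 1, q.2) = _
    unfold F
    rw [if_pos (by omega)]
    have : ((q.2 + q.1 + 1 : ℕ):ℝ)+1/2 = (q.2:ℝ)+(q.1:ℝ)+3/2 := by push_cast; ring
    rw [this]
  rwa [hfun] at h

private lemma rsum_eq_tsum_Sv : Rsum 1 3 = ∑' i : ℕ, Sv i := by
  have h1 : Rsum 1 3 = ∑' n : ℕ, genH 1 n * (((n:ℝ)+1/2)^3)⁻¹ := by
    unfold Rsum
    exact tsum_congr fun n => by rw [div_eq_mul_inv]
  have h2 : ∑' n : ℕ, genH 1 n * (((n:ℝ)+1/2)^3)⁻¹ = ∑' p, F p := by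
    rw [Summable.tsum_prod' summable_F (fun n => (hasSum_row n).summable)]
    exact tsum_congr fun n => ((hasSum_row n).tsum_eq).symm
  have h3 : ∑' p, F p = ∑' i : ℕ, Sv i := by
    rw [← hasSum_P.tsum_eq, Summable.tsum_prod' hasSum_P.summable (fun i => (hasSum_inner i).summable)]
    exact tsum_congr fun i => by
      have := hasSum_inner i
      exact (this.tsum_eq)
  rw [h1, h2, h3]


theorem stmt5 : Rsum 1 3 = -14 * Real.log 2 * zv 3 + Real.pi ^ 4 / 8 := by
  have hf1 : HasSum (fun i : ℕ => (((i:ℝ)+1/2)^3)⁻¹ * (oddH 1 (i+1) - 2*Real.log 2))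
      (O13 - 2*Real.log 2 * ttv 3) := by
    have h := summable_O13.hasSum.sub ((hasSum_ttv (show 2 ≤ 3 by norm_num)).mul_left
      (2*Real.log 2))
    have hfun : (fun i : ℕ => oddH 1 (i+1) * (((i:ℝ)+1/2)^3)⁻¹
        - 2*Real.log 2 * (((i:ℝ)+1/2)^3)⁻¹)
        = fun i : ℕ => (((i:ℝ)+1/2)^3)⁻¹ * (oddH 1 (i+1) - 2*Real.log 2) := by
      funext i; ring
    rwa [hfun] at h
  have hf2 : HasSum (fun i : ℕ => (((i:ℝ)+1/2)^2)⁻¹ * (ttv 2 - oddH 2 (i+1)))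
      (ttv 2 * ttv 2 - (ttv 2 * ttv 2 + ttv 4)/2) := by
    have h := ((hasSum_ttv (le_refl 2)).mul_left (ttv 2)).sub summable_O22.hasSum
    rw [O22_eq] at h
    have hfun : (fun i : ℕ => ttv 2 * (((i:ℝ)+1/2)^2)⁻¹ - oddH 2 (i+1) * (((i:ℝ)+1/2)^2)⁻¹)
        = fun i : ℕ => (((i:ℝ)+1/2)^2)⁻¹ * (ttv 2 - oddH 2 (i+1)) := by
      funext i; ring
    rwa [hfun] at h
  have hf3 : HasSum (fun i : ℕ => ((i:ℝ)+1/2)⁻¹ * (ttv 3 - oddH 3 (i+1))) (O13 - ttv 4) := by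
    have h := hasSum_C
    have hfun : (fun i : ℕ => (ttv 3 - oddH 3 (i+1)) * ((i:ℝ)+1/2)⁻¹)
        = fun i : ℕ => ((i:ℝ)+1/2)⁻¹ * (ttv 3 - oddH 3 (i+1)) := by
      funext i; ring
    rwa [hfun] at h
  have hSv : HasSum Sv ((O13 - 2*Real.log 2 * ttv 3)
      - (ttv 2 * ttv 2 - (ttv 2 * ttv 2 + ttv 4)/2) - (O13 - ttv 4)) :=
    (hf1.sub hf2).sub hf3
  rw [rsum_eq_tsum_Sv, hSv.tsum_eq]
  have h2 : ttv 2 = Real.pi^2/2 := by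
    rw [ttv_eq (le_refl 2), zv_two]; norm_num; ring
  have h4 : ttv 4 = Real.pi^4/6 := by
    rw [ttv_eq (show 2 ≤ 4 by norm_num), zv_four]; norm_num; ring
  have h3 : ttv 3 = 7 * zv 3 := by
    rw [ttv_eq (show 2 ≤ 3 by norm_num)]; norm_num
  rw [h2, h3, h4]
  ring
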